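/- Let k ≥ 2 be an integer, a = (a_1,…,a_k) ∈ ℝ^k, and c_1,…,c_k > 0. Then the system x_1 − 2c_1/x_1 = a_1 − c_2/x_2; x_i − 2c_i/x_i = a_i − c_{i−1}/x_{i−1} − c_{i+1}/x_{i+1} for i = 2,…,k−1; x_k − 2c_k/x_k = a_k − c_{k−1}/x_{k−1} has a unique solution (x_1^*,…,x_k^*) with all x_i^* > 0. Moreover, defining x_i^{(0)} = (a_i + √(a_i² + 8c_i))/2 for i = 1,…,k and recursively x_1^{(n+1)} = (A_1^{(n)} + √((A_1^{(n)})² + 8c_1))/2 with A_1^{(n)} = a_1 − c_2/x_2^{(n)}, x_i^{(n+1)} = (A_i^{(n)} + √((A_i^{(n)})² + 8c_i))/2 with A_i^{(n)} = a_i − c_{i−1}/x_{i−1}^{(n)} − c_{i+1}/x_{i+1}^{(n)} for i = 2,…,k−1, and x_k^{(n+1)} = (A_k^{(n)} + √((A_k^{(n)})² + 8c_k))/2 with A_k^{(n)} = a_k − c_{k−1}/x_{k−1}^{(n)}, the sequence (x_i^{(n)})_{n ≥ 0} is decreasing in n for each i and converges to x_i^* as n → ∞. -/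

import Mathlib

open Filter

/-- The drift term `A_i^{(n)}` of the iterative scheme for the nearest-neighbour
system, with `0`-based indices `0,…,k-1`. -/
noncomputable def nnDrift (k : ℕ) (a c : ℕ → ℝ) (x : ℕ → ℝ) (i : ℕ) : ℝ :=
  if i = 0 then a 0 - c 1 / x 1
  else if i = k - 1 then a (k - 1) - c (k - 2) / x (k - 2)
  else a i - c (i - 1) / x (i - 1) - c (i + 1) / x (i + 1)

/-- The iterative scheme `x^{(n)}_i` of Proposition 4.1, with `0`-based indices:
`x^{(0)}_i = (a_i + √(a_i² + 8c_i))/2` and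
`x^{(n+1)}_i = (A_i^{(n)} + √((A_i^{(n)})² + 8c_i))/2`. -/
noncomputable def nnIter (k : ℕ) (a c : ℕ → ℝ) : ℕ → ℕ → ℝ
  | 0 => fun i => (a i + Real.sqrt ((a i) ^ 2 + 8 * c i)) / 2
  | n + 1 => fun i =>
      (nnDrift k a c (nnIter k a c n) i
        + Real.sqrt ((nnDrift k a c (nnIter k a c n) i) ^ 2 + 8 * c i)) / 2

/-- The nearest-neighbour system of equations of Proposition 4.1 (with
`0`-based indices `0,…,k-1`):
`x_0 - 2c_0/x_0 = a_0 - c_1/x_1`,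
`x_i - 2c_i/x_i = a_i - c_{i-1}/x_{i-1} - c_{i+1}/x_{i+1}` for `1 ≤ i ≤ k-2`,
`x_{k-1} - 2c_{k-1}/x_{k-1} = a_{k-1} - c_{k-2}/x_{k-2}`. -/
def nnSol (k : ℕ) (a c : ℕ → ℝ) (x : ℕ → ℝ) : Prop :=
  x 0 - 2 * c 0 / x 0 = a 0 - c 1 / x 1 ∧
  (∀ i, 1 ≤ i → i ≤ k - 2 →
    x i - 2 * c i / x i = a i - c (i - 1) / x (i - 1) - c (i + 1) / x (i + 1)) ∧
  x (k - 1) - 2 * c (k - 1) / x (k - 1) = a (k - 1) - c (k - 2) / x (k - 2)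


noncomputable def fRoot (c t : ℝ) : ℝ := (t + Real.sqrt (t ^ 2 + 8 * c)) / 2

lemma fRoot_pos {c : ℝ} (hc : 0 < c) (t : ℝ) : 0 < fRoot c t := by
  have h : |t| < Real.sqrt (t ^ 2 + 8 * c) := by
    rw [← Real.sqrt_sq_eq_abs]
    exact Real.sqrt_lt_sqrt (sq_nonneg t) (by linarith)
  have h2 := neg_abs_le t
  unfold fRoot; linarith

lemma fRoot_sq {c : ℝ} (hc : 0 < c) (t : ℝ) :
    (fRoot c t) ^ 2 = t * fRoot c t + 2 * c := by
  have h : Real.sqrt (t ^ 2 + 8 * c) ^ 2 = t ^ 2 + 8 * c :=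
    Real.sq_sqrt (by positivity)
  unfold fRoot; nlinarith [h]

lemma le_fRoot {c t x : ℝ} (hc : 0 < c) (hx : 0 < x)
    (h : x ^ 2 - t * x - 2 * c ≤ 0) : x ≤ fRoot c t := by
  have hf := fRoot_pos hc t
  have hsq := fRoot_sq hc t
  nlinarith [mul_pos hx hf]

lemma fRoot_le {c t x : ℝ} (hc : 0 < c) (hx : 0 < x)
    (h : 0 ≤ x ^ 2 - t * x - 2 * c) : fRoot c t ≤ x := by
  have hf := fRoot_pos hc t
  have hsq := fRoot_sq hc t
  nlinarith [mul_pos hx hf]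

lemma fRoot_mono {c t s : ℝ} (hc : 0 < c) (h : t ≤ s) : fRoot c t ≤ fRoot c s := by
  apply le_fRoot hc (fRoot_pos hc t)
  have hsq := fRoot_sq hc t
  have hf := fRoot_pos hc t
  nlinarith

lemma fRoot_eqn {c t x : ℝ} (hc : 0 < c) (hx : 0 < x) (h : x = fRoot c t) :
    x - 2 * c / x = t := by
  have hsq := fRoot_sq hc t
  rw [h]
  have hf := fRoot_pos hc t
  field_simp
  nlinarith

lemma sbp (W : ℕ → ℝ) (k : ℕ) :
    ∑ j ∈ Finset.range k, W (j+1) * (W j + W (j+2) - 2 * W (j+1))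
      = -(∑ j ∈ Finset.range (k+1), (W (j+1) - W j)^2)
        + (W (k+1) - W k) * W (k+1) - (W 1 - W 0) * W 0 := by
  induction k with
  | zero => simp [Finset.sum_range_succ]; ring
  | succ n ih =>
      rw [Finset.sum_range_succ, ih, Finset.sum_range_succ (n := n+1)]
      ring

noncomputable def mkU (k : ℕ) (c : ℕ → ℝ) (x : ℕ → ℝ) (j : ℕ) : ℝ :=
  if 1 ≤ j ∧ j ≤ k then c (j-1) / x (j-1) else 0

lemma mkU_succ (k : ℕ) (c x : ℕ → ℝ) (i : ℕ) (hi : i < k) :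
    mkU k c x (i+1) = c i / x i := by
  rw [mkU, if_pos (by omega)]
  simp

lemma eqGen (k : ℕ) (hk : 2 ≤ k) (a c : ℕ → ℝ) (x : ℕ → ℝ) (hs : nnSol k a c x) :
    ∀ i, i < k →
      mkU k c x i + mkU k c x (i+2) - 2 * mkU k c x (i+1) + x i = a i := by
  intro i hi
  obtain ⟨h1, h2, h3⟩ := hs
  rw [mkU_succ k c x i hi]
  rcases Nat.eq_zero_or_pos i with h0 | hpos
  · subst h0
    rw [mkU, if_neg (by omega), mkU, if_pos (by omega)]
    norm_num
    rw [mul_div_assoc] at h1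
    linarith [h1]
  · rcases eq_or_ne i (k-1) with hlast | hmid
    · subst hlast
      rw [mkU, if_pos (by omega), mkU, if_neg (by omega)]
      have e : k - 1 - 1 = k - 2 := by omega
      rw [e]
      rw [mul_div_assoc] at h3
      linarith [h3]
    · have hle : i ≤ k - 2 := by omega
      rw [mkU, if_pos (by omega), mkU, if_pos (by omega)]
      have e2 : i + 2 - 1 = i + 1 := by omega
      rw [e2]
      have hm := h2 i hpos hle
      rw [mul_div_assoc] at hm
      linarith [hm]

lemma nn_unique (k : ℕ) (hk : 2 ≤ k) (a c : ℕ → ℝ) (hc : ∀ i, i < k → 0 < c i)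
    (y z : ℕ → ℝ) (hy : ∀ i, i < k → 0 < y i) (hz : ∀ i, i < k → 0 < z i)
    (hsy : nnSol k a c y) (hsz : nnSol k a c z) :
    ∀ i, i < k → y i = z i := by
  classical
  set W : ℕ → ℝ := fun j => mkU k c y j - mkU k c z j with hW
  have eqW : ∀ i, i < k → W i + W (i+2) - 2 * W (i+1) = z i - y i := by
    intro i hi
    have ey := eqGen k hk a c y hsy i hi
    have ez := eqGen k hk a c z hsz i hi
    simp only [hW]
    linarith
  have hW0 : W 0 = 0 := by simp [hW, mkU]
  have hWk : W (k+1) = 0 := by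
    simp only [hW, mkU, if_neg (show ¬(1 ≤ k+1 ∧ k+1 ≤ k) by omega)]; ring
  -- the sum
  have hterm : ∀ i, i < k →
      W (i+1) * (W i + W (i+2) - 2 * W (i+1)) = c i * (z i - y i)^2 / (y i * z i) := by
    intro i hi
    rw [eqW i hi]
    simp only [hW, mkU_succ k c y i hi, mkU_succ k c z i hi]
    have hyi := hy i hi
    have hzi := hz i hi
    field_simp
  have hsum := sbp W k
  rw [hW0, hWk] at hsum
  have hsum2 : ∑ j ∈ Finset.range k, W (j+1) * (W j + W (j+2) - 2 * W (j+1))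
      = ∑ j ∈ Finset.range k, c j * (z j - y j)^2 / (y j * z j) :=
    Finset.sum_congr rfl (fun j hj => hterm j (Finset.mem_range.mp hj))
  have hle : ∑ j ∈ Finset.range k, c j * (z j - y j)^2 / (y j * z j) ≤ 0 := by
    rw [← hsum2, hsum]
    have : (0:ℝ) ≤ ∑ j ∈ Finset.range (k+1), (W (j+1) - W j)^2 :=
      Finset.sum_nonneg (fun j _ => sq_nonneg _)
    linarith
  have hnn : ∀ j ∈ Finset.range k, (0:ℝ) ≤ c j * (z j - y j)^2 / (y j * z j) := by
    intro j hj
    have hj' := Finset.mem_range.mp hj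
    have := hc j hj'; have := hy j hj'; have := hz j hj'
    positivity
  have hzero : ∀ j ∈ Finset.range k, c j * (z j - y j)^2 / (y j * z j) = 0 := by
    have hs0 : ∑ j ∈ Finset.range k, c j * (z j - y j)^2 / (y j * z j) = 0 :=
      le_antisymm hle (Finset.sum_nonneg hnn)
    exact (Finset.sum_eq_zero_iff_of_nonneg hnn).mp hs0
  intro i hi
  have h := hzero i (Finset.mem_range.mpr hi)
  have hci := hc i hi; have hyi := hy i hi; have hzi := hz i hi
  have hne : y i * z i ≠ 0 := by positivity
  have hd : (z i - y i)^2 = 0 := by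
    rcases div_eq_zero_iff.mp h with h' | h'
    · rcases mul_eq_zero.mp h' with h'' | h''
      · exact absurd h'' (ne_of_gt hci)
      · exact h''
    · exact absurd h' hne
  nlinarith [hd]

lemma nnIter_zero (k : ℕ) (a c : ℕ → ℝ) (i : ℕ) :
    nnIter k a c 0 i = fRoot (c i) (a i) := rfl

lemma nnIter_succ (k : ℕ) (a c : ℕ → ℝ) (n i : ℕ) :
    nnIter k a c (n+1) i = fRoot (c i) (nnDrift k a c (nnIter k a c n) i) := rfl

lemma drift_le (k : ℕ) (hk : 2 ≤ k) (a c : ℕ → ℝ) (hc : ∀ i, i < k → 0 < c i) (x : ℕ → ℝ) (hx : ∀ j, j < k → 0 < x j) (i : ℕ) (hi : i < k) :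
    nnDrift k a c x i ≤ a i := by
  unfold nnDrift
  split_ifs with h0 h1
  · subst h0
    have := div_pos (hc 1 (by omega)) (hx 1 (by omega))
    linarith
  · rw [h1]
    have := div_pos (hc (k-2) (by omega)) (hx (k-2) (by omega))
    linarith
  · have := div_pos (hc (i-1) (by omega)) (hx (i-1) (by omega))
    have := div_pos (hc (i+1) (by omega)) (hx (i+1) (by omega))
    linarith

lemma drift_mono (k : ℕ) (hk : 2 ≤ k) (a c : ℕ → ℝ) (hc : ∀ i, i < k → 0 < c i) (x y : ℕ → ℝ) (hx : ∀ j, j < k → 0 < x j)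
    (hxy : ∀ j, j < k → x j ≤ y j) (i : ℕ) (hi : i < k) :
    nnDrift k a c x i ≤ nnDrift k a c y i := by
  have key : ∀ j, j < k → c j / y j ≤ c j / x j := fun j hj =>
    div_le_div_of_nonneg_left (hc j hj).le (hx j hj) (hxy j hj)
  unfold nnDrift
  split_ifs with h0 h1
  · have := key 1 (by omega); linarith
  · have := key (k-2) (by omega); linarith
  · have h2 : i - 1 < k := by omega
    have h3 : i + 1 < k := by omega
    have := key (i-1) h2; have := key (i+1) h3; linarith

lemma iter_pos (k : ℕ) (hk : 2 ≤ k) (a c : ℕ → ℝ) (hc : ∀ i, i < k → 0 < c i) : ∀ n i, i < k → 0 < nnIter k a c n i := by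
  intro n
  induction n with
  | zero => intro i hi; rw [nnIter_zero]; exact fRoot_pos (hc i hi) _
  | succ n ih => intro i hi; rw [nnIter_succ]; exact fRoot_pos (hc i hi) _

lemma iter_succ_le (k : ℕ) (hk : 2 ≤ k) (a c : ℕ → ℝ) (hc : ∀ i, i < k → 0 < c i) : ∀ n i, i < k → nnIter k a c (n+1) i ≤ nnIter k a c n i := by
  intro n
  induction n with
  | zero =>
      intro i hi
      rw [nnIter_succ, nnIter_zero]
      exact fRoot_mono (hc i hi)
        (drift_le k hk a c hc _ (iter_pos k hk a c hc 0) i hi)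
  | succ n ih =>
      intro i hi
      rw [nnIter_succ, nnIter_succ]
      exact fRoot_mono (hc i hi)
        (drift_mono k hk a c hc _ _ (iter_pos k hk a c hc (n+1)) ih i hi)


lemma subkey (c s S a ε P : ℝ) (hc : 0 < c) (hs : 0 < s) (hD : S - 2*s ≤ -1)
    (hcs : c/s ≤ P) (ha : |a| ≤ P) (hε : 0 < ε) (hε1 : ε ≤ 1)
    (hεP : ε ≤ 1/(2*P)) (hP : 0 < P) :
    (ε*c/s)^2 - (a - S/ε)*(ε*c/s) - 2*c ≤ 0 := by
  have e1 : (ε*c/s)^2 - (a - S/ε)*(ε*c/s) - 2*c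
      = (c/s)*(ε^2*(c/s) - a*ε + (S - 2*s)) := by
    field_simp
    ring
  rw [e1]
  have hcs0 : 0 < c/s := div_pos hc hs
  have hεsq : ε^2 ≤ ε := by nlinarith
  have h2a : ε^2*(c/s) ≤ ε*(c/s) := mul_le_mul_of_nonneg_right hεsq hcs0.le
  have h2b : ε*(c/s) ≤ ε*P := mul_le_mul_of_nonneg_left hcs hε.le
  have h2 : ε^2*(c/s) ≤ ε*P := le_trans h2a h2b
  have h3 : -(a*ε) ≤ ε*P := by
    have h := neg_abs_le a
    nlinarith
  have h4 : ε*P ≤ 1/2 := by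
    rw [le_div_iff₀ (by positivity)] at hεP
    nlinarith
  have hfac : ε^2*(c/s) - a*ε + (S - 2*s) ≤ 0 := by linarith
  exact mul_nonpos_of_nonneg_of_nonpos hcs0.le hfac

lemma lower_bound (k : ℕ) (hk : 2 ≤ k) (a c : ℕ → ℝ) (hc : ∀ i, i < k → 0 < c i) :
    ∃ L : ℕ → ℝ, (∀ i, i < k → 0 < L i) ∧
      ∀ n i, i < k → L i ≤ nnIter k a c n i := by
  classical
  set s : ℕ → ℝ := fun i => 2*(k:ℝ)^2 - (i:ℝ)^2 with hsdef
  have hkR : (2:ℝ) ≤ (k:ℝ) := by exact_mod_cast hk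
  have hs : ∀ i, i < k → 0 < s i := by
    intro i hi
    have : (i:ℝ) < k := by exact_mod_cast hi
    have h0 : (0:ℝ) ≤ (i:ℝ) := Nat.cast_nonneg i
    simp only [hsdef]
    nlinarith
  have hne : (Finset.range k).Nonempty := ⟨0, Finset.mem_range.mpr (by omega)⟩
  set Q : ℝ := (Finset.range k).sup' hne (fun i => max (c i / s i) |a i|) with hQdef
  have hsup : ∀ i, i < k → max (c i / s i) |a i| ≤ Q := by
    intro i hi
    rw [hQdef]
    exact Finset.le_sup' (fun i => max (c i / s i) |a i|) (Finset.mem_range.mpr hi)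
  have hQ0 : 0 ≤ Q :=
    le_trans (le_trans (abs_nonneg (a 0)) (le_max_right _ _)) (hsup 0 (by omega))
  set P : ℝ := 1 + Q with hPdef
  have hP : 0 < P := by rw [hPdef]; linarith
  have hPc : ∀ i, i < k → c i / s i ≤ P := by
    intro i hi
    have := le_trans (le_max_left (c i / s i) |a i|) (hsup i hi)
    rw [hPdef]; linarith
  have hPa : ∀ i, i < k → |a i| ≤ P := by
    intro i hi
    have := le_trans (le_max_right (c i / s i) |a i|) (hsup i hi)
    rw [hPdef]; linarith
  set m : ℝ := (Finset.range k).inf' hne (fun i => nnIter k a c 0 i) with hmdef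
  have hm : 0 < m := by
    rw [hmdef, Finset.lt_inf'_iff]
    intro i hi
    exact iter_pos k hk a c hc 0 i (Finset.mem_range.mp hi)
  have hmle : ∀ i, i < k → m ≤ nnIter k a c 0 i := fun i hi =>
    Finset.inf'_le _ (Finset.mem_range.mpr hi)
  set ε : ℝ := min 1 (min (1/(2*P)) (m/(2*P))) with hεdef
  have hε : 0 < ε := by
    rw [hεdef]
    simp only [lt_min_iff]
    refine ⟨one_pos, by positivity, by positivity⟩
  have hε1 : ε ≤ 1 := min_le_left _ _
  have hεP : ε ≤ 1/(2*P) := le_trans (min_le_right _ _) (min_le_left _ _)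
  have hεm : ε ≤ m/(2*P) := le_trans (min_le_right _ _) (min_le_right _ _)
  set L : ℕ → ℝ := fun i => ε * c i / s i with hLdef
  have hLpos : ∀ i, i < k → 0 < L i := by
    intro i hi
    simp only [hLdef]
    exact div_pos (mul_pos hε (hc i hi)) (hs i hi)
  have hcL : ∀ j, j < k → c j / L j = s j / ε := by
    intro j hj
    have h1 := hc j hj; have h2 := hs j hj
    simp only [hLdef]
    rw [div_eq_div_iff (by positivity) (ne_of_gt hε)]
    field_simp
  have hL0 : ∀ i, i < k → L i ≤ nnIter k a c 0 i := by
    intro i hi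
    have h1 : L i = ε * (c i / s i) := by rw [hLdef]; ring
    have h2 : ε * (c i / s i) ≤ ε * P :=
      mul_le_mul_of_nonneg_left (hPc i hi) hε.le
    have h3 : ε * P ≤ (m/(2*P)) * P := mul_le_mul_of_nonneg_right hεm hP.le
    have h4 : (m/(2*P)) * P = m/2 := by field_simp
    have := hmle i hi
    linarith [h1 ▸ le_trans h2 (le_trans h3 (le_of_eq h4)), hm]
  -- subsolution property
  have hsub : ∀ i, i < k → L i ≤ fRoot (c i) (nnDrift k a c L i) := by
    intro i hi
    apply le_fRoot (hc i hi) (hLpos i hi)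
    have hci := hc i hi
    unfold nnDrift
    split_ifs with h0 h1
    · subst h0
      rw [hcL 1 (by omega)]
      have hD : s 1 - 2 * s 0 ≤ -1 := by
        simp only [hsdef]; push_cast; nlinarith
      exact subkey (c 0) (s 0) (s 1) (a 0) ε P (hc 0 (by omega)) (hs 0 (by omega))
        hD (hPc 0 (by omega)) (hPa 0 (by omega)) hε hε1 hεP hP
    · rw [h1, hcL (k-2) (by omega)]
      have hD : s (k-2) - 2 * s (k-1) ≤ -1 := by
        simp only [hsdef]
        have e1 : ((k-1:ℕ):ℝ) = (k:ℝ) - 1 := by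
          rw [Nat.cast_sub (by omega)]; norm_num
        have e2 : ((k-2:ℕ):ℝ) = (k:ℝ) - 2 := by
          rw [Nat.cast_sub (by omega)]; norm_num
        rw [e1, e2]; nlinarith
      exact subkey (c (k-1)) (s (k-1)) (s (k-2)) (a (k-1)) ε P (hc (k-1) (by omega))
        (hs (k-1) (by omega)) hD (hPc (k-1) (by omega)) (hPa (k-1) (by omega))
        hε hε1 hεP hP
    · have hi1 : 1 ≤ i := by omega
      have hik : i + 1 < k := by omega
      have him : i - 1 < k := by omega
      rw [hcL (i-1) him, hcL (i+1) hik]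
      have e3 : a i - s (i-1) / ε - s (i+1) / ε = a i - (s (i-1) + s (i+1)) / ε := by
        field_simp
        ring
      rw [e3]
      have hD : (s (i-1) + s (i+1)) - 2 * s i ≤ -1 := by
        simp only [hsdef]
        have e1 : ((i-1:ℕ):ℝ) = (i:ℝ) - 1 := by
          rw [Nat.cast_sub (by omega)]; norm_num
        rw [e1]; push_cast; nlinarith
      exact subkey (c i) (s i) (s (i-1) + s (i+1)) (a i) ε P hci (hs i hi) hD
        (hPc i hi) (hPa i hi) hε hε1 hεP hP
  refine ⟨L, hLpos, ?_⟩
  intro n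
  induction n with
  | zero => exact hL0
  | succ n ih =>
      intro i hi
      rw [nnIter_succ]
      exact le_trans (hsub i hi)
        (fRoot_mono (hc i hi) (drift_mono k hk a c hc L _ hLpos ih i hi))

/-- Proposition 4.1 of the paper. The nearest-neighbour
system has a unique positive solution `x*`, and for each `i` the iterates
`x^{(n)}_i` decrease in `n` and converge to `x*_i`. -/
theorem nearest_neighbor_unique_solution_and_iteration
    (k : ℕ) (hk : 2 ≤ k) (a c : ℕ → ℝ) (hc : ∀ i, i < k → 0 < c i) :
    ∃ x : ℕ → ℝ, (∀ i, i < k → 0 < x i) ∧ nnSol k a c x ∧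
      (∀ y : ℕ → ℝ, (∀ i, i < k → 0 < y i) → nnSol k a c y →
        ∀ i, i < k → y i = x i) ∧
      (∀ i, i < k →
        (Antitone fun n : ℕ => nnIter k a c n i) ∧
        Tendsto (fun n : ℕ => nnIter k a c n i) atTop (nhds (x i))) := by
  classical
  obtain ⟨L, hLpos, hL⟩ := lower_bound k hk a c hc
  set x : ℕ → ℝ := fun i => ⨅ n, nnIter k a c n i with hxdef
  have hanti : ∀ i, i < k → Antitone (fun n : ℕ => nnIter k a c n i) := by
    intro i hi
    exact antitone_nat_of_succ_le (fun n => iter_succ_le k hk a c hc n i hi)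
  have hbdd : ∀ i, i < k → BddBelow (Set.range fun n : ℕ => nnIter k a c n i) := by
    intro i hi
    refine ⟨L i, ?_⟩
    rintro _ ⟨n, rfl⟩
    exact hL n i hi
  have htend : ∀ i, i < k →
      Tendsto (fun n : ℕ => nnIter k a c n i) atTop (nhds (x i)) := by
    intro i hi
    exact tendsto_atTop_ciInf (hanti i hi) (hbdd i hi)
  have hxpos : ∀ i, i < k → 0 < x i := by
    intro i hi
    have : L i ≤ x i := le_ciInf (fun n => hL n i hi)
    linarith [hLpos i hi]
  have hfix : ∀ i, i < k → x i = fRoot (c i) (nnDrift k a c x i) := by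
    intro i hi
    have hdt : Tendsto (fun n : ℕ => nnDrift k a c (nnIter k a c n) i) atTop
        (nhds (nnDrift k a c x i)) := by
      by_cases h0 : i = 0
      · have he : ∀ y : ℕ → ℝ, nnDrift k a c y i = a 0 - c 1 / y 1 := by
          intro y; rw [nnDrift, if_pos h0]
        simp only [he]
        exact tendsto_const_nhds.sub
          (tendsto_const_nhds.div (htend 1 (by omega))
            (ne_of_gt (hxpos 1 (by omega))))
      · by_cases h1 : i = k - 1
        · have he : ∀ y : ℕ → ℝ, nnDrift k a c y i
              = a (k-1) - c (k-2) / y (k-2) := by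
            intro y; rw [nnDrift, if_neg h0, if_pos h1]
          simp only [he]
          exact tendsto_const_nhds.sub
            (tendsto_const_nhds.div (htend (k-2) (by omega))
              (ne_of_gt (hxpos (k-2) (by omega))))
        · have he : ∀ y : ℕ → ℝ, nnDrift k a c y i
              = a i - c (i-1) / y (i-1) - c (i+1) / y (i+1) := by
            intro y; rw [nnDrift, if_neg h0, if_neg h1]
          simp only [he]
          have hm : i - 1 < k := by omega
          have hp : i + 1 < k := by omega
          exact (tendsto_const_nhds.sub
            (tendsto_const_nhds.div (htend (i-1) hm)
              (ne_of_gt (hxpos (i-1) hm)))).sub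
            (tendsto_const_nhds.div (htend (i+1) hp)
              (ne_of_gt (hxpos (i+1) hp)))
    have hcont : Continuous (fRoot (c i)) := by
      unfold fRoot
      continuity
    have hft : Tendsto (fun n : ℕ => fRoot (c i) (nnDrift k a c (nnIter k a c n) i))
        atTop (nhds (fRoot (c i) (nnDrift k a c x i))) :=
      (hcont.tendsto _).comp hdt
    have hshift : Tendsto (fun n : ℕ => nnIter k a c (n+1) i) atTop (nhds (x i)) :=
      (htend i hi).comp (tendsto_add_atTop_nat 1)
    have heq : (fun n : ℕ => nnIter k a c (n+1) i)
        = fun n : ℕ => fRoot (c i) (nnDrift k a c (nnIter k a c n) i) := by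
      funext n; exact nnIter_succ k a c n i
    rw [heq] at hshift
    exact tendsto_nhds_unique hshift hft
  have heqn : ∀ i, i < k → x i - 2 * c i / x i = nnDrift k a c x i := fun i hi =>
    fRoot_eqn (hc i hi) (hxpos i hi) (hfix i hi)
  have hsol : nnSol k a c x := by
    refine ⟨?_, ?_, ?_⟩
    · have := heqn 0 (by omega)
      rwa [nnDrift, if_pos rfl] at this
    · intro i h1 h2
      have hik : i < k := by omega
      have := heqn i hik
      rwa [nnDrift, if_neg (by omega), if_neg (by omega)] at this
    · have := heqn (k-1) (by omega)
      rwa [nnDrift, if_neg (by omega), if_pos rfl] at this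
  refine ⟨x, hxpos, hsol, ?_, fun i hi => ⟨hanti i hi, htend i hi⟩⟩
  intro y hy hsy i hi
  exact nn_unique k hk a c hc y x hy hxpos hsy hsol i hi
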